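/- Let w = T_{i_1}^{m_1} ⋯ T_{i_ℓ}^{m_ℓ} with i_j ≤ m_j for all j and m_1 < m_2 < ⋯ < m_ℓ (segments T_i^m = [m, m−1, …, i]). If i_r ≥ i_s for some r < s, then w is not a homogeneous word. -/
import Mathlib


/-- `a` and `b` are neighbors in the type `A` Dynkin diagram, i.e. `|a - b| = 1`. -/
def Nbr (a b : ℕ) : Prop := a + 1 = b ∨ b + 1 = a

/-- A word `w` over the alphabet `{1, …, n}` is homogeneous: whenever two equal letters
occur at positions `r < s`, there exist positions `t, u` with `r < t < u < s` whose
letters are both neighbors of the repeated letter. -/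
def Homog (w : List ℕ) : Prop :=
  ∀ r s : ℕ, r < s → s < w.length → w.getD r 0 = w.getD s 0 →
    ∃ t u : ℕ, r < t ∧ t < u ∧ u < s ∧
      Nbr (w.getD t 0) (w.getD r 0) ∧ Nbr (w.getD u 0) (w.getD r 0)

/-- The decreasing segment word `T_i^j = [j, j-1, …, i+1, i]` (empty when `i > j`). -/
def segWord (i j : ℕ) : List ℕ :=
  (List.range' i (j + 1 - i)).reverse

lemma segWord_length (i j : ℕ) : (segWord i j).length = j + 1 - i := by
  simp [segWord]

lemma segWord_getD (i j k : ℕ) (hij : i ≤ j) (hk : k < j + 1 - i) :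
    (segWord i j).getD k 0 = j - k := by
  rw [segWord, List.getD_eq_getElem _ _ (by simpa using hk), List.getElem_reverse,
    List.getElem_range']
  simp only [List.length_range']
  omega

lemma core (P S : List ℕ) (a b i' m' : ℕ) (hab : a ≤ b) (hia : i' ≤ a) (hbm : b < m') :
    ¬ Homog (P ++ (segWord a b ++ (segWord i' m' ++ S))) := by
  intro h
  set W := P ++ (segWord a b ++ (segWord i' m' ++ S)) with hWdef
  set c := P.length with hc
  set lp := b + 1 - a with hlp
  have hlen1 : (segWord a b).length = lp := segWord_length a b
  have htail : ∀ k, k < m' + 1 - i' → W.getD (c + lp + k) 0 = m' - k := by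
    intro k hk
    rw [hWdef, List.getD_append_right _ _ _ _ (by omega),
      List.getD_append_right _ _ _ _ (by omega)]
    rw [show c + lp + k - c - (segWord a b).length = k by omega]
    rw [List.getD_append _ _ _ _ (by rw [segWord_length]; omega)]
    exact segWord_getD i' m' k (by omega) (by omega)
  have h1 : W.getD (c + (lp - 1)) 0 = a := by
    rw [hWdef, List.getD_append_right _ _ _ _ (by omega),
      List.getD_append _ _ _ _ (by omega)]
    rw [show c + (lp - 1) - c = lp - 1 by omega]
    rw [segWord_getD a b (lp - 1) hab (by omega)]
    omega
  have h2 : W.getD (c + lp + (m' - a)) 0 = a := by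
    rw [htail (m' - a) (by omega)]; omega
  have hWlen : W.length = c + lp + ((m' + 1 - i') + S.length) := by
    rw [hWdef]; simp [segWord_length]; omega
  obtain ⟨t, u, htr, htu, hus, hnt, hnu⟩ :=
    h (c + (lp - 1)) (c + lp + (m' - a)) (by omega) (by omega) (by rw [h1, h2])
  rw [h1] at hnt hnu
  have ht' : W.getD t 0 = m' - (t - c - lp) := by
    have := htail (t - c - lp) (by omega)
    rwa [show c + lp + (t - c - lp) = t by omega] at this
  have hu' : W.getD u 0 = m' - (u - c - lp) := by
    have := htail (u - c - lp) (by omega)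
    rwa [show c + lp + (u - c - lp) = u by omega] at this
  rw [ht'] at hnt
  rw [hu'] at hnu
  unfold Nbr at hnt hnu
  omega

/-- If `w = T_{i_1}^{m_1} ⋯ T_{i_ℓ}^{m_ℓ}` with `i_j ≤ m_j` and `m_1 < ⋯ < m_ℓ`, and
`i_r ≥ i_s` for some `r < s`, then `w` is not a homogeneous word. -/
theorem not_homog_of_not_increasing (ps : List (ℕ × ℕ))
    (hle : ∀ p ∈ ps, p.1 ≤ p.2)
    (hchain : List.Chain' (fun p q => p.2 < q.2) ps)
    (r s : ℕ) (hrs : r < s) (hs : s < ps.length)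
    (hge : (ps.getD s (0, 0)).1 ≤ (ps.getD r (0, 0)).1) :
    ¬ Homog ((ps.map (fun p => segWord p.1 p.2)).flatten) := by
  -- find an adjacent violating pair
  have hadj : ∃ k, k + 1 < ps.length ∧
      (ps.getD (k + 1) (0, 0)).1 ≤ (ps.getD k (0, 0)).1 := by
    by_contra hno
    push_neg at hno
    have mono : ∀ d r', r' + d + 1 < ps.length →
        (ps.getD r' (0, 0)).1 < (ps.getD (r' + d + 1) (0, 0)).1 := by
      intro d
      induction d with
      | zero => intro r' h'; exact hno r' h'
      | succ n ih =>
        intro r' h'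
        have h1 := ih r' (by omega)
        have h2 := hno (r' + n + 1) (by omega)
        calc (ps.getD r' (0, 0)).1 < (ps.getD (r' + n + 1) (0, 0)).1 := h1
          _ < (ps.getD (r' + n + 1 + 1) (0, 0)).1 := h2
          _ = (ps.getD (r' + (n + 1) + 1) (0, 0)).1 := by ring_nf
    have := mono (s - r - 1) r (by omega)
    rw [show r + (s - r - 1) + 1 = s by omega] at this
    omega
  obtain ⟨k, hk, hk2⟩ := hadj
  have hpk : k < ps.length := by omega
  set p := ps[k] with hp
  set q := ps[k + 1]'hk with hq
  have hsplit : ps = ps.take k ++ (p :: (q :: ps.drop (k + 2))) := by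
    conv_lhs => rw [← List.take_append_drop k ps,
      List.drop_eq_getElem_cons hpk, List.drop_eq_getElem_cons hk]
  have hq1p1 : q.1 ≤ p.1 := by
    rwa [List.getD_eq_getElem _ _ hk, List.getD_eq_getElem _ _ hpk] at hk2
  have hp12 : p.1 ≤ p.2 := hle p (by rw [hp]; exact List.getElem_mem hpk)
  have hp2q2 : p.2 < q.2 := by
    have := List.isChain_iff_getElem.mp hchain k (by omega)
    simpa [List.get_eq_getElem] using this
  rw [hsplit]
  simp only [List.map_append, List.map_cons, List.flatten_append, List.flatten_cons]
  exact core _ _ p.1 p.2 q.1 q.2 hp12 hq1p1 hp2q2
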